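/- Every ovoid of the symplectic generalized quadrangle W(q) is an ovoid of PG(3,q): no three of its points are collinear in PG(3,q). -/

import Mathlib

open scoped Classical
open Module

noncomputable section

variable (F : Type) [Field F] [Fintype F]

abbrev V4 := Fin 4 → F

def IsPt (p : Submodule F (V4 F)) : Prop := finrank F p = 1

def IsLn (L : Submodule F (V4 F)) : Prop := finrank F L = 2

def ptsOn (L : Submodule F (V4 F)) : Set (Submodule F (V4 F)) :=
  {p | IsPt F p ∧ p ≤ L}

def Coll3 (p r s : Submodule F (V4 F)) : Prop :=
  ∃ L, IsLn F L ∧ p ≤ L ∧ r ≤ L ∧ s ≤ L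

def IsOvoid (q : ℕ) (O : Set (Submodule F (V4 F))) : Prop :=
  (∀ p ∈ O, IsPt F p) ∧ O.ncard = q ^ 2 + 1 ∧
    ∀ p ∈ O, ∀ r ∈ O, ∀ s ∈ O, p ≠ r → p ≠ s → r ≠ s → ¬ Coll3 F p r s

def TotIso (B : LinearMap.BilinForm F (V4 F)) (L : Submodule F (V4 F)) : Prop :=
  IsLn F L ∧ ∀ x ∈ L, ∀ y ∈ L, B x y = 0

def Pt := {p : Submodule F (V4 F) // IsPt F p}

def chi (s : Set (Submodule F (V4 F))) : Pt F → ZMod 2 :=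
  fun p => if p.1 ∈ s then 1 else 0

def commonTangents (q : ℕ) (θ : Fin (q + 1) → Set (Submodule F (V4 F))) :
    Set (Submodule F (V4 F)) :=
  {L | IsLn F L ∧ ∀ i, (θ i ∩ ptsOn F L).ncard = 1}

def gridSet (B : LinearMap.BilinForm F (V4 F)) (m : Submodule F (V4 F)) :
    Set (Submodule F (V4 F)) :=
  ptsOn F m ∪ ptsOn F (LinearMap.BilinForm.orthogonal B m)

def lineCode (B : LinearMap.BilinForm F (V4 F)) :
    Submodule (ZMod 2) (Pt F → ZMod 2) :=
  Submodule.span (ZMod 2) {w | ∃ L, TotIso F B L ∧ w = chi F (ptsOn F L)}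

def gridCode (B : LinearMap.BilinForm F (V4 F)) :
    Submodule (ZMod 2) (Pt F → ZMod 2) :=
  Submodule.span (ZMod 2)
    {w | ∃ m, IsLn F m ∧ ¬ (∀ x ∈ m, ∀ y ∈ m, B x y = 0) ∧ w = chi F (gridSet F B m)}

section Aux
variable {F}

lemma V4_finrank : finrank F (V4 F) = 4 := Module.finrank_fin_fun (R := F)

instance : Finite (Submodule F (V4 F)) :=
  Finite.of_injective (fun W => (W : Set (V4 F))) SetLike.coe_injective

lemma card_submodule (W : Submodule F (V4 F)) :
    Nat.card W = Fintype.card F ^ finrank F W := by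
  have : Fintype W := Fintype.ofFinite W
  rw [Nat.card_eq_fintype_card]
  exact card_eq_pow_finrank

lemma exists_pt_le {W : Submodule F (V4 F)} (h : 0 < finrank F W) :
    ∃ p, IsPt F p ∧ p ≤ W := by
  have hW : W ≠ ⊥ := by
    intro hbot
    rw [hbot, finrank_bot] at h
    omega
  obtain ⟨v, hv, h0⟩ := Submodule.exists_mem_ne_zero_of_ne_bot hW
  exact ⟨Submodule.span F {v}, finrank_span_singleton h0,
    Submodule.span_le.mpr (Set.singleton_subset_iff.mpr hv)⟩

lemma pt_eq_span {p : Submodule F (V4 F)} (hp : IsPt F p) {v : V4 F}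
    (hv : v ∈ p) (h0 : v ≠ 0) : p = Submodule.span F {v} := by
  refine (Submodule.eq_of_le_of_finrank_le
    (Submodule.span_le.mpr (Set.singleton_subset_iff.mpr hv)) ?_).symm
  rw [hp, finrank_span_singleton h0]

lemma pt_exists_gen {p : Submodule F (V4 F)} (hp : IsPt F p) :
    ∃ v, v ≠ 0 ∧ p = Submodule.span F {v} := by
  have hW : p ≠ ⊥ := by
    intro hbot
    rw [hbot] at hp
    unfold IsPt at hp
    rw [finrank_bot] at hp
    omega
  obtain ⟨v, hv, h0⟩ := Submodule.exists_mem_ne_zero_of_ne_bot hW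
  exact ⟨v, h0, pt_eq_span hp hv h0⟩

lemma pt_inf_eq_bot {p y : Submodule F (V4 F)} (hp : IsPt F p) (hy : IsPt F y)
    (hne : p ≠ y) : p ⊓ y = ⊥ := by
  by_contra h
  obtain ⟨v, hv, h0⟩ := Submodule.exists_mem_ne_zero_of_ne_bot h
  exact hne ((pt_eq_span hp hv.1 h0).trans (pt_eq_span hy hv.2 h0).symm)

lemma sup_isLn {p y : Submodule F (V4 F)} (hp : IsPt F p) (hy : IsPt F y)
    (hne : p ≠ y) : IsLn F (p ⊔ y) := by
  have h := Submodule.finrank_sup_add_finrank_inf_eq p y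
  rw [pt_inf_eq_bot hp hy hne, finrank_bot, hp, hy] at h
  unfold IsLn
  omega

variable {B : LinearMap.BilinForm F (V4 F)}

lemma alt_skew (halt : ∀ v, B v v = 0) (a b : V4 F) : B b a = - B a b := by
  have h := halt (a + b)
  simp only [map_add, LinearMap.add_apply, halt] at h
  linear_combination h

lemma pt_pair_zero (halt : ∀ v, B v v = 0) {p : Submodule F (V4 F)}
    (hp : IsPt F p) {a c : V4 F} (ha : a ∈ p) (hc : c ∈ p) : B a c = 0 := by
  obtain ⟨v, h0, rfl⟩ := pt_exists_gen hp
  obtain ⟨s, rfl⟩ := Submodule.mem_span_singleton.mp ha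
  obtain ⟨t, rfl⟩ := Submodule.mem_span_singleton.mp hc
  simp [halt]

lemma pt_le_orthogonal (halt : ∀ v, B v v = 0) {p : Submodule F (V4 F)}
    (hp : IsPt F p) : p ≤ B.orthogonal p := by
  intro m hm n hn
  exact pt_pair_zero halt hp hn hm

lemma totIso_sup (halt : ∀ v, B v v = 0) {p y : Submodule F (V4 F)}
    (hp : IsPt F p) (hy : IsPt F y) (hne : p ≠ y)
    (hperp : y ≤ B.orthogonal p) : TotIso F B (p ⊔ y) := by
  refine ⟨sup_isLn hp hy hne, ?_⟩
  intro x hx z hz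
  obtain ⟨a, ha, b, hb, rfl⟩ := Submodule.mem_sup.mp hx
  obtain ⟨c, hc, d, hd, rfl⟩ := Submodule.mem_sup.mp hz
  have h1 : B a c = 0 := pt_pair_zero halt hp ha hc
  have h2 : B b d = 0 := pt_pair_zero halt hy hb hd
  have h3 : B a d = 0 := hperp hd a ha
  have h4 : B b c = 0 := by
    rw [alt_skew halt c b, hperp hb c hc, neg_zero]
  simp [map_add, LinearMap.add_apply, h1, h2, h3, h4]

lemma packing {W0 W1 : Submodule F (V4 F)} (T : Set (Submodule F (V4 F)))
    (hle0 : ∀ M ∈ T, W0 ≤ M) (hle1 : ∀ M ∈ T, M ≤ W1)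
    (hW01 : W0 ≤ W1)
    (hdisj : ∀ M ∈ T, ∀ N ∈ T, M ≠ N → M ⊓ N = W0) {c : ℕ}
    (hc : ∀ M ∈ T, Nat.card M = c) :
    T.ncard * (c - Nat.card W0) ≤ Nat.card W1 - Nat.card W0 := by
  have hTfin : T.Finite := Set.toFinite T
  set t : Finset (Submodule F (V4 F)) := hTfin.toFinset with ht
  have hcard_set : ∀ M : Submodule F (V4 F), Nat.card M = ((M : Set (V4 F))).ncard := by
    intro M
    rw [← Nat.card_coe_set_eq]
    rfl
  set f : Submodule F (V4 F) → Finset (V4 F) :=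
    fun M => ((M : Set (V4 F)) \ (W0 : Set (V4 F))).toFinite.toFinset with hf
  have hfcard : ∀ M ∈ T, (f M).card = c - Nat.card W0 := by
    intro M hM
    simp only [hf]
    rw [← Set.ncard_eq_toFinset_card _ (((M : Set (V4 F)) \ (W0 : Set (V4 F))).toFinite)]
    rw [Set.ncard_diff (SetLike.coe_subset_coe.mpr (hle0 M hM))]
    rw [← hcard_set, ← hcard_set, hc M hM]
  have hdisjf : ∀ M ∈ t, ∀ N ∈ t, M ≠ N → Disjoint (f M) (f N) := by
    intro M hM N hN hne
    rw [hTfin.mem_toFinset] at hM hN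
    rw [hf, Set.Finite.disjoint_toFinset]
    rw [Set.disjoint_iff]
    rintro x ⟨⟨hxM, hx0⟩, ⟨hxN, -⟩⟩
    exact hx0 (by rw [← hdisj M hM N hN hne]; exact ⟨hxM, hxN⟩)
  have hunion : (t.biUnion f).card = t.card * (c - Nat.card W0) := by
    rw [Finset.card_biUnion hdisjf]
    rw [Finset.sum_congr rfl (fun M hM => hfcard M (hTfin.mem_toFinset.mp hM))]
    rw [Finset.sum_const, smul_eq_mul]
  have hsub : t.biUnion f ⊆ ((W1 : Set (V4 F)) \ (W0 : Set (V4 F))).toFinite.toFinset := by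
    intro x hx
    obtain ⟨M, hM, hxM⟩ := Finset.mem_biUnion.mp hx
    rw [hTfin.mem_toFinset] at hM
    rw [hf, Set.Finite.mem_toFinset] at hxM
    rw [Set.Finite.mem_toFinset]
    exact ⟨hle1 M hM hxM.1, hxM.2⟩
  have hW1card : (((W1 : Set (V4 F)) \ (W0 : Set (V4 F))).toFinite.toFinset).card
      ≤ Nat.card W1 - Nat.card W0 := by
    rw [← Set.ncard_eq_toFinset_card _ (((W1 : Set (V4 F)) \ (W0 : Set (V4 F))).toFinite)]
    rw [Set.ncard_diff (SetLike.coe_subset_coe.mpr hW01)]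
    rw [← hcard_set, ← hcard_set]
  calc T.ncard * (c - Nat.card W0) = t.card * (c - Nat.card W0) := by
        rw [ht, Set.ncard_eq_toFinset_card T hTfin]
    _ = (t.biUnion f).card := hunion.symm
    _ ≤ _ := Finset.card_le_card hsub
    _ ≤ _ := hW1card

lemma pts_le {L : Submodule F (V4 F)} (h2 : finrank F L = 2) :
    {p | IsPt F p ∧ p ≤ L}.ncard ≤ Fintype.card F + 1 := by
  obtain ⟨m, hm⟩ : ∃ m, Fintype.card F = m + 2 :=
    ⟨Fintype.card F - 2, by have := Fintype.one_lt_card (α := F); omega⟩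
  have key := packing (W0 := ⊥) (W1 := L) {p | IsPt F p ∧ p ≤ L}
    (fun M _ => bot_le) (fun M hM => hM.2) bot_le
    (fun M hM N hN hne => pt_inf_eq_bot hM.1 hN.1 hne)
    (c := Fintype.card F)
    (fun M hM => by rw [card_submodule, hM.1, pow_one])
  rw [card_submodule, card_submodule, finrank_bot, pow_zero, h2, hm] at key
  rw [show (m + 2) ^ 2 = (m + 3) * (m + 1) + 1 from by ring, Nat.add_sub_cancel] at key
  rw [show m + 2 - 1 = m + 1 from rfl] at key
  have := Nat.le_of_mul_le_mul_right key (show 0 < m + 1 by omega)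
  omega

lemma lines_le {p W1 : Submodule F (V4 F)} (hp : IsPt F p) (h3 : finrank F W1 = 3)
    (hpW : p ≤ W1) :
    {M | IsLn F M ∧ p ≤ M ∧ M ≤ W1}.ncard ≤ Fintype.card F + 1 := by
  obtain ⟨m, hm⟩ : ∃ m, Fintype.card F = m + 2 :=
    ⟨Fintype.card F - 2, by have := Fintype.one_lt_card (α := F); omega⟩
  have hdisj : ∀ M ∈ {M | IsLn F M ∧ p ≤ M ∧ M ≤ W1},
      ∀ N ∈ {M | IsLn F M ∧ p ≤ M ∧ M ≤ W1}, M ≠ N → M ⊓ N = p := by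
    rintro M ⟨hM2, hpM, hMW⟩ N ⟨hN2, hpN, hNW⟩ hne
    have hinf_le : finrank F (M ⊓ N : Submodule F (V4 F)) ≤ 1 := by
      by_contra hgt
      have h2le : finrank F M ≤ finrank F (M ⊓ N : Submodule F (V4 F)) := by
        rw [hM2]; omega
      have hMeq := Submodule.eq_of_le_of_finrank_le inf_le_left h2le
      have h2le' : finrank F N ≤ finrank F (M ⊓ N : Submodule F (V4 F)) := by
        rw [hN2]; omega
      have hNeq := Submodule.eq_of_le_of_finrank_le inf_le_right h2le'
      exact hne (hMeq.symm.trans hNeq)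
    have hple : p ≤ M ⊓ N := le_inf hpM hpN
    have hp' : finrank F p = 1 := hp
    exact (Submodule.eq_of_le_of_finrank_le hple (by rw [hp']; exact hinf_le)).symm
  have key := packing (W0 := p) (W1 := W1) {M | IsLn F M ∧ p ≤ M ∧ M ≤ W1}
    (fun M hM => hM.2.1) (fun M hM => hM.2.2) hpW hdisj
    (c := Fintype.card F ^ 2)
    (fun M hM => by rw [card_submodule, hM.1])
  have hp' : finrank F p = 1 := hp
  rw [card_submodule, card_submodule, hp', pow_one, h3, hm] at key
  rw [show (m + 2) ^ 2 = (m + 2) * (m + 1) + (m + 2) from by ring, Nat.add_sub_cancel] at key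
  rw [show (m + 2) ^ 3 = (m + 3) * ((m + 2) * (m + 1)) + (m + 2) from by ring,
    Nat.add_sub_cancel] at key
  have := Nat.le_of_mul_le_mul_right key
    (show 0 < (m + 2) * (m + 1) by positivity)
  omega

section WithO
variable {O : Set (Submodule F (V4 F))}

lemma perpSet_of_mem (halt : ∀ v, B v v = 0)
    (hOpt : ∀ p ∈ O, IsPt F p)
    (hOnc : ∀ p ∈ O, ∀ r ∈ O, p ≠ r → ¬ ∃ L, TotIso F B L ∧ p ≤ L ∧ r ≤ L)
    {x : Submodule F (V4 F)} (hx : x ∈ O) :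
    O ∩ {y | y ≤ B.orthogonal x} = {x} := by
  ext y
  constructor
  · rintro ⟨hyO, hyperp⟩
    by_contra hne
    have hne' : x ≠ y := fun h => hne (Set.mem_singleton_iff.mpr h.symm)
    exact hOnc x hx y hyO hne'
      ⟨x ⊔ y, totIso_sup halt (hOpt x hx) (hOpt y hyO) hne' hyperp,
        le_sup_left, le_sup_right⟩
  · rintro rfl
    exact ⟨hx, pt_le_orthogonal halt (hOpt y hx)⟩

lemma perpSet_of_not_mem (halt : ∀ v, B v v = 0) (hnd : B.Nondegenerate)
    (hOpt : ∀ p ∈ O, IsPt F p)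
    (hOnc : ∀ p ∈ O, ∀ r ∈ O, p ≠ r → ¬ ∃ L, TotIso F B L ∧ p ≤ L ∧ r ≤ L)
    {x : Submodule F (V4 F)} (hxpt : IsPt F x) (hx : x ∉ O) :
    (O ∩ {y | y ≤ B.orthogonal x}).ncard ≤ Fintype.card F + 1 := by
  have hrefl : B.IsRefl := fun a b h => by rw [alt_skew halt a b, h, neg_zero]
  have horth3 : finrank F (B.orthogonal x) = 3 := by
    rw [LinearMap.BilinForm.finrank_orthogonal hnd, V4_finrank]
    have hx1 : finrank F x = 1 := hxpt
    rw [hx1]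
  have hinj : Set.InjOn (fun y => x ⊔ y) (O ∩ {y | y ≤ B.orthogonal x}) := by
    rintro y ⟨hyO, hyperp⟩ y' ⟨hy'O, hy'perp⟩ heq
    by_contra hne
    have hxy : x ≠ y := fun h => hx (h ▸ hyO)
    refine hOnc y hyO y' hy'O hne
      ⟨x ⊔ y, totIso_sup halt hxpt (hOpt y hyO) hxy hyperp, le_sup_right, ?_⟩
    simp only at heq
    rw [heq]
    exact le_sup_right
  calc (O ∩ {y | y ≤ B.orthogonal x}).ncard
      = ((fun y => x ⊔ y) '' (O ∩ {y | y ≤ B.orthogonal x})).ncard :=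
        (Set.ncard_image_of_injOn hinj).symm
    _ ≤ {M | IsLn F M ∧ x ≤ M ∧ M ≤ B.orthogonal x}.ncard := by
        apply Set.ncard_le_ncard _ (Set.toFinite _)
        rintro M ⟨y, ⟨hyO, hyperp⟩, rfl⟩
        have hxy : x ≠ y := fun h => hx (h ▸ hyO)
        exact ⟨sup_isLn hxpt (hOpt y hyO) hxy, le_sup_left,
          sup_le (pt_le_orthogonal halt hxpt) hyperp⟩
    _ ≤ Fintype.card F + 1 := lines_le hxpt horth3 (pt_le_orthogonal halt hxpt)

end WithO

end Aux

theorem stmt4 (q : ℕ) (hq : Fintype.card F = q)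
    (B : LinearMap.BilinForm F (V4 F))
    (halt : ∀ v, B v v = 0) (hnd : B.Nondegenerate)
    (O : Set (Submodule F (V4 F)))
    (hOpt : ∀ p ∈ O, IsPt F p) (hOcard : O.ncard = q ^ 2 + 1)
    (hOnc : ∀ p ∈ O, ∀ r ∈ O, p ≠ r →
      ¬ ∃ L, TotIso F B L ∧ p ≤ L ∧ r ≤ L) :
    IsOvoid F q O := by
  refine ⟨hOpt, hOcard, ?_⟩
  rintro p hp r hr s hs hpr hps hrs ⟨L, hL2, hpL, hrL, hsL⟩
  have hq2 : 2 ≤ q := hq ▸ Fintype.one_lt_card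
  have hrefl : B.IsRefl := fun a b h => by rw [alt_skew halt a b, h, neg_zero]
  have hL2' : finrank F L = 2 := hL2
  set P : Set (Submodule F (V4 F)) := {x | IsPt F x ∧ x ≤ L} with hP
  set Pf : Finset (Submodule F (V4 F)) := P.toFinite.toFinset with hPf
  set f : Submodule F (V4 F) → Finset (Submodule F (V4 F)) :=
    fun x => (O ∩ {y | y ≤ B.orthogonal x}).toFinite.toFinset with hf
  -- covering
  have hcover : O ⊆ ↑(Pf.biUnion f) := by
    intro y hy
    have hypt : finrank F y = 1 := hOpt y hy
    have horth : finrank F (B.orthogonal y) = 3 := by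
      rw [LinearMap.BilinForm.finrank_orthogonal hnd, V4_finrank, hypt]
    have h1 : 0 < finrank F (L ⊓ B.orthogonal y : Submodule F (V4 F)) := by
      have hsum := Submodule.finrank_sup_add_finrank_inf_eq L (B.orthogonal y)
      have hle4 : finrank F (L ⊔ B.orthogonal y : Submodule F (V4 F)) ≤ 4 := by
        have h := Submodule.finrank_le (L ⊔ B.orthogonal y)
        rwa [V4_finrank] at h
      rw [hL2', horth] at hsum
      omega
    obtain ⟨x, hxpt, hxle⟩ := exists_pt_le h1
    have hyperp : y ≤ B.orthogonal x := by
      intro m hm n hn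
      have hn' : n ∈ B.orthogonal y := (hxle.trans inf_le_right) hn
      exact hrefl m n (hn' m hm)
    rw [Finset.coe_biUnion]
    refine Set.mem_biUnion (show x ∈ (Pf : Set _) from ?_) ?_
    · rw [hPf, Set.Finite.coe_toFinset]
      exact ⟨hxpt, hxle.trans inf_le_left⟩
    · rw [hf]
      simp only [Set.Finite.coe_toFinset]
      exact ⟨hy, hyperp⟩
  -- the three points are in Pf
  have hmemPf : ∀ x ∈ O, x ≤ L → x ∈ Pf := by
    intro x hx hxL
    rw [hPf, Set.Finite.mem_toFinset]
    exact ⟨hOpt x hx, hxL⟩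
  set s3 : Finset (Submodule F (V4 F)) := {p, r, s} with hs3
  have hs3sub : s3 ⊆ Pf := by
    intro x hx
    rw [hs3] at hx
    simp only [Finset.mem_insert, Finset.mem_singleton] at hx
    rcases hx with rfl | rfl | rfl
    · exact hmemPf x hp hpL
    · exact hmemPf x hr hrL
    · exact hmemPf x hs hsL
  have hs3card : s3.card = 3 := by
    rw [hs3, Finset.card_insert_of_notMem (by simp [hpr, hps]),
      Finset.card_insert_of_notMem (by simp [hrs]), Finset.card_singleton]
  -- counting
  have hcount : O.ncard ≤ ∑ x ∈ Pf, (f x).card := by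
    calc O.ncard ≤ (↑(Pf.biUnion f) : Set (Submodule F (V4 F))).ncard :=
          Set.ncard_le_ncard hcover (Set.toFinite _)
      _ = (Pf.biUnion f).card := Set.ncard_coe_finset _
      _ ≤ _ := Finset.card_biUnion_le
  have hfx_card : ∀ x, (f x).card = (O ∩ {y | y ≤ B.orthogonal x}).ncard := by
    intro x
    simp only [hf]
    exact (Set.ncard_eq_toFinset_card _ (Set.toFinite _)).symm
  have hfx_mem : ∀ x ∈ O, (f x).card = 1 := by
    intro x hx
    rw [hfx_card, perpSet_of_mem halt hOpt hOnc hx, Set.ncard_singleton]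
  have hsum_s3 : ∑ x ∈ s3, (f x).card = 3 := by
    have hcongr : ∑ x ∈ s3, (f x).card = ∑ _x ∈ s3, 1 :=
      Finset.sum_congr rfl (fun x hx => by
        rw [hs3] at hx
        simp only [Finset.mem_insert, Finset.mem_singleton] at hx
        rcases hx with rfl | rfl | rfl
        · exact hfx_mem x hp
        · exact hfx_mem x hr
        · exact hfx_mem x hs)
    rw [hcongr, Finset.sum_const, smul_eq_mul, hs3card]
  have hbound : ∀ x ∈ Pf \ s3, (f x).card ≤ q + 1 := by
    intro x hx
    have hxP : x ∈ P := by
      have hxPf := (Finset.mem_sdiff.mp hx).1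
      rw [hPf, Set.Finite.mem_toFinset] at hxPf
      exact hxPf
    by_cases hxO : x ∈ O
    · rw [hfx_mem x hxO]; omega
    · rw [hfx_card]
      rw [← hq]
      exact perpSet_of_not_mem halt hnd hOpt hOnc hxP.1 hxO
  have hPfcard : Pf.card ≤ q + 1 := by
    rw [hPf, ← Set.ncard_eq_toFinset_card P P.toFinite, ← hq]
    exact pts_le hL2'
  have hPf3 : 3 ≤ Pf.card := hs3card ▸ Finset.card_le_card hs3sub
  have hsum_rest : ∑ x ∈ Pf \ s3, (f x).card ≤ (Pf.card - 3) * (q + 1) := by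
    calc ∑ x ∈ Pf \ s3, (f x).card ≤ (Pf \ s3).card • (q + 1) :=
          Finset.sum_le_card_nsmul _ _ _ hbound
      _ = (Pf.card - 3) * (q + 1) := by
          rw [Finset.card_sdiff_of_subset hs3sub, hs3card, smul_eq_mul]
  have htotal : q ^ 2 + 1 ≤ 3 + (Pf.card - 3) * (q + 1) := by
    have hsplit : ∑ x ∈ Pf, (f x).card
        = ∑ x ∈ Pf \ s3, (f x).card + ∑ x ∈ s3, (f x).card :=
      (Finset.sum_sdiff hs3sub).symm
    rw [← hOcard]
    calc O.ncard ≤ ∑ x ∈ Pf, (f x).card := hcount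
      _ = ∑ x ∈ Pf \ s3, (f x).card + 3 := by rw [hsplit, hsum_s3]
      _ ≤ (Pf.card - 3) * (q + 1) + 3 := by omega
      _ = 3 + (Pf.card - 3) * (q + 1) := by omega
  have hfinal : q ^ 2 + 1 ≤ 3 + (q - 2) * (q + 1) := by
    have h1 : Pf.card - 3 ≤ q - 2 := by omega
    have h2 : (Pf.card - 3) * (q + 1) ≤ (q - 2) * (q + 1) :=
      Nat.mul_le_mul_right _ h1
    omega
  obtain ⟨m, rfl⟩ : ∃ m, q = m + 2 := ⟨q - 2, by omega⟩
  rw [show m + 2 - 2 = m from by omega] at hfinal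
  nlinarith [hfinal]
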